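/- Let X be a random vector on ℝ^D with a twice continuously differentiable density p whose Laplacian Δp is integrable, such that the Fourier inversion formula holds for p. Let Ψ be a random vector independent of X with E[Ψ] = 0 and covariance matrix equal to the identity, and for σ² > 0 let p_{σ²} denote the density of X + σΨ. Then for every point z ∈ ℝ^D, p_{σ²}(z) = p(z) + (σ²/2) Δp(z) + o(σ²) as σ² → 0⁺; in particular, the one-sided derivative of σ² ↦ p_{σ²}(z) at σ² = 0⁺ equals (1/2) Δp(z). -/

import Mathlib

open MeasureTheory Real Filter Set Asymptotics
open scoped Topology RealInnerProductSpace ENNReal FourierTransform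

noncomputable section

/-- The density of `X + √s • Ψ` where `X` has Lebesgue density `p` and the noise `Ψ`
has law `μ` (the convolution of `p` with the law of `√s • Ψ`). -/
def smoothed {D : ℕ} (p : EuclideanSpace ℝ (Fin D) → ℝ)
    (μ : Measure (EuclideanSpace ℝ (Fin D))) (s : ℝ)
    (z : EuclideanSpace ℝ (Fin D)) : ℝ :=
  ∫ w, p (z - Real.sqrt s • w) ∂μ

/-- The Laplacian `Δf(x) = Σ_j ∂²f/∂x_j²` of a function on `ℝ^D`. -/
def laplacian {D : ℕ} (f : EuclideanSpace ℝ (Fin D) → ℝ)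
    (x : EuclideanSpace ℝ (Fin D)) : ℝ :=
  ∑ j : Fin D, fderiv ℝ (fun y => fderiv ℝ f y (EuclideanSpace.single j 1)) x
      (EuclideanSpace.single j 1)

/-- One-dimensional second order Taylor estimate with a uniform bound on the second
derivative. -/
theorem taylor2_bound {f f' f'' : ℝ → ℝ} (hf : ∀ x, HasDerivAt f (f' x) x)
    (hf' : ∀ x, HasDerivAt f' (f'' x) x) {t M : ℝ} (ht : 0 ≤ t)
    (hM : ∀ x ∈ Icc 0 t, |f'' x| ≤ M) :
    |f t - f 0 - t * f' 0| ≤ M / 2 * t ^ 2 := by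
  have step1 : ∀ x ∈ Icc 0 t, |f' x - f' 0| ≤ M * x := by
    intro x hx
    have hxt : Icc (0:ℝ) x ⊆ Icc 0 t := Icc_subset_Icc le_rfl hx.2
    have := Convex.norm_image_sub_le_of_norm_hasDerivWithin_le
      (f := f') (f' := f'') (s := Icc 0 x) (C := M)
      (fun y hy => (hf' y).hasDerivWithinAt)
      (fun y hy => hM y (hxt hy)) (convex_Icc 0 x)
      (left_mem_Icc.2 hx.1) (right_mem_Icc.2 hx.1)
    simpa [Real.norm_eq_abs, abs_of_nonneg hx.1] using this
  set g : ℝ → ℝ := fun x => f x - f 0 - x * f' 0 with hg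
  have hgd : ∀ x, HasDerivAt g (f' x - f' 0) x := by
    intro x
    exact (((hf x).sub_const (f 0)).sub ((hasDerivAt_id x).mul_const (f' 0))).congr_deriv (by ring)
  have main : ∀ (σ : ℝ), σ = 1 ∨ σ = -1 → σ * g t ≤ M / 2 * t ^ 2 := by
    intro σ hσ
    set h : ℝ → ℝ := fun x => M / 2 * x ^ 2 - σ * g x with hh
    have hhd : ∀ x, HasDerivAt h (M * x - σ * (f' x - f' 0)) x := by
      intro x
      have h1 : HasDerivAt (fun x : ℝ => M / 2 * x ^ 2) (M / 2 * (2 * x)) x := by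
        simpa using ((hasDerivAt_pow 2 x).const_mul (M / 2))
      have := h1.sub ((hgd x).const_mul σ)
      exact this.congr_deriv (by ring)
    have hmono : MonotoneOn h (Icc 0 t) := by
      apply monotoneOn_of_deriv_nonneg (convex_Icc 0 t)
      · exact fun x hx => ((hhd x).continuousAt).continuousWithinAt
      · exact fun x hx => ((hhd x).differentiableAt).differentiableWithinAt
      · intro x hx
        rw [(hhd x).deriv]
        rw [interior_Icc] at hx
        have hb := step1 x (Ioo_subset_Icc_self hx)
        have : σ * (f' x - f' 0) ≤ M * x := by
          rcases hσ with h1 | h1 <;> rw [h1] <;>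
            [skip; rw [neg_one_mul]] <;> nlinarith [abs_le.1 hb]
        linarith
    have h0 : h 0 ≤ h t := hmono (left_mem_Icc.2 ht) (right_mem_Icc.2 ht) ht
    have : h 0 = 0 := by simp [hh, hg]
    rw [this] at h0
    simp only [hh] at h0
    linarith
  have h1 := main 1 (Or.inl rfl)
  have h2 := main (-1) (Or.inr rfl)
  rw [abs_le]
  constructor <;> [linarith [h2]; linarith [h1]]

/-- First and second derivatives of `t ↦ p (z - t • w)` for a `C²` function `p`. -/
theorem phi_deriv {D : ℕ} (p : EuclideanSpace ℝ (Fin D) → ℝ) (hp2 : ContDiff ℝ 2 p)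
    (z w : EuclideanSpace ℝ (Fin D)) :
    (∀ t : ℝ, HasDerivAt (fun t : ℝ => p (z - t • w))
        (-(fderiv ℝ p (z - t • w) w)) t) ∧
    (∀ t : ℝ, HasDerivAt (fun t : ℝ => -(fderiv ℝ p (z - t • w) w))
        (fderiv ℝ (fderiv ℝ p) (z - t • w) w w) t) := by
  have hdiff : Differentiable ℝ p := hp2.differentiable (by norm_num)
  have hC1 : ContDiff ℝ 1 (fderiv ℝ p) := hp2.fderiv_right (m := 1) (by norm_num)
  have hdiff' : Differentiable ℝ (fderiv ℝ p) := hC1.differentiable one_ne_zero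
  have hα : ∀ t : ℝ, HasDerivAt (fun t : ℝ => z - t • w) (-w) t := by
    intro t
    simpa using ((hasDerivAt_id t).smul_const w).const_sub z
  constructor
  · intro t
    have h1 : HasFDerivAt p (fderiv ℝ p (z - t • w)) (z - t • w) :=
      (hdiff _).hasFDerivAt
    have := h1.comp_hasDerivAt t (hα t)
    exact this.congr_deriv (by simp)
  · intro t
    have h1 : HasFDerivAt (fderiv ℝ p) (fderiv ℝ (fderiv ℝ p) (z - t • w)) (z - t • w) :=
      (hdiff' _).hasFDerivAt
    have h2 : HasFDerivAt (fun x => fderiv ℝ p x w)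
        ((ContinuousLinearMap.apply ℝ ℝ w).comp (fderiv ℝ (fderiv ℝ p) (z - t • w)))
        (z - t • w) := (ContinuousLinearMap.apply ℝ ℝ w).hasFDerivAt.comp _ h1
    have h3 := (h2.comp_hasDerivAt t (hα t)).neg
    exact h3.congr_deriv (by simp)

/-- A function satisfying the Fourier inversion formula with unit integral is bounded. -/
theorem exists_bound_of_fourierInv {D : ℕ} (p : EuclideanSpace ℝ (Fin D) → ℝ)
    (hp1 : ∫ x, p x = 1) (hpi : Integrable p)
    (hFourier : ∀ z, 𝓕⁻ (𝓕 (fun x => (p x : ℂ))) z = (p z : ℂ)) :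
    ∃ C : ℝ, 0 ≤ C ∧ ∀ x, |p x| ≤ C := by
  set pc : EuclideanSpace ℝ (Fin D) → ℂ := fun x => (p x : ℂ) with hpc_def
  have hpc : Integrable pc := hpi.ofReal
  have hL : Continuous fun q : EuclideanSpace ℝ (Fin D) × EuclideanSpace ℝ (Fin D) =>
      (-(innerₗ (EuclideanSpace ℝ (Fin D)))) q.1 q.2 := by
    simp only [LinearMap.neg_apply, innerₗ_apply_apply]
    exact continuous_inner.neg
  have hInt : Integrable (𝓕 pc) := by
    by_contra hni
    have h0 : ∀ x : EuclideanSpace ℝ (Fin D), (p x : ℂ) = 0 := by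
      intro x
      rw [← hFourier x]
      apply integral_undef
      rw [VectorFourier.fourierIntegral_convergent_iff
        Real.continuous_fourierChar hL x]
      exact hni
    have : p = fun _ => 0 := funext fun x => by exact_mod_cast h0 x
    rw [this] at hp1
    simp at hp1
  refine ⟨∫ v, ‖𝓕 pc v‖, integral_nonneg (fun v => norm_nonneg _), fun x => ?_⟩
  have hb := VectorFourier.norm_fourierIntegral_le_integral_norm 𝐞 volume
    (-(innerₗ (EuclideanSpace ℝ (Fin D)))) (𝓕 pc) x
  have hble : ‖𝓕⁻ (𝓕 pc) x‖ ≤ ∫ v, ‖𝓕 pc v‖ := hb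
  rw [hFourier x] at hble
  simpa using hble

/-- Abbreviation for the Euclidean space used below. -/
abbrev Euc (D : ℕ) := EuclideanSpace ℝ (Fin D)

set_option maxHeartbeats 2000000 in
/-- pointwise heat-type expansion for arbitrary isotropic noise:
`p_{σ²}(z) = p(z) + (σ²/2) Δp(z) + o(σ²)` as `σ² → 0⁺`, and in particular the one-sided
derivative of `σ² ↦ p_{σ²}(z)` at `σ² = 0⁺` equals `(1/2) Δp(z)`. -/
theorem smoothed_density_expansion
    (D : ℕ) (p : EuclideanSpace ℝ (Fin D) → ℝ)
    (μ : Measure (EuclideanSpace ℝ (Fin D))) [IsProbabilityMeasure μ]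
    -- p is a twice continuously differentiable probability density
    (hp2 : ContDiff ℝ 2 p)
    (hp0 : ∀ x, 0 ≤ p x) (hp1 : ∫ x, p x = 1) (hpi : Integrable p)
    -- the Laplacian of p is integrable
    (hΔ : Integrable (laplacian p))
    -- the Fourier inversion formula holds for p
    (hFourier : ∀ z, 𝓕⁻ (𝓕 (fun x => (p x : ℂ))) z = (p z : ℂ))
    -- Ψ has zero mean and identity covariance
    (hmean : ∫ w, w ∂μ = 0)
    (hcov : ∀ k : EuclideanSpace ℝ (Fin D), ∫ w, ⟪k, w⟫ ^ 2 ∂μ = ‖k‖ ^ 2) :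
    ∀ z : EuclideanSpace ℝ (Fin D),
      ((fun s : ℝ => smoothed p μ s z - p z - s / 2 * laplacian p z)
          =o[𝓝[>] (0 : ℝ)] (fun s : ℝ => s)) ∧
      HasDerivWithinAt (fun s : ℝ => smoothed p μ s z)
        ((1 / 2) * laplacian p z) (Ici (0 : ℝ)) 0 := by
  classical
  intro z
  -- smoothness facts
  have hdiff : Differentiable ℝ p := hp2.differentiable (by norm_num)
  have hcont : Continuous p := hdiff.continuous
  have hC1 : ContDiff ℝ 1 (fderiv ℝ p) := hp2.fderiv_right (m := 1) (by norm_num)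
  have hdiff' : Differentiable ℝ (fderiv ℝ p) := hC1.differentiable one_ne_zero
  have hHcont : Continuous (fderiv ℝ (fderiv ℝ p)) := (contDiff_one_iff_fderiv.mp hC1).2
  -- p is (globally) bounded, via the Fourier inversion hypothesis
  obtain ⟨C, hC0, hCb⟩ := exists_bound_of_fourierInv p hp1 hpi hFourier
  -- coordinate vectors and moments of μ
  set e : Fin D → Euc D := fun j => EuclideanSpace.single j 1 with he
  have hinner : ∀ (j : Fin D) (w : Euc D), ⟪e j, w⟫ = w j := by
    intro j w
    simp [he, EuclideanSpace.inner_single_left]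
  have hsq_int : ∀ j, Integrable (fun w : Euc D => (w j) ^ 2) μ := by
    intro j
    by_contra hni
    have h := hcov (e j)
    simp_rw [hinner j] at h
    rw [integral_undef hni] at h
    simp [he, EuclideanSpace.norm_single] at h
  have hmoment : ∀ j, ∫ w, (w j) ^ 2 ∂μ = 1 := by
    intro j
    have h := hcov (e j)
    simp_rw [hinner j] at h
    simpa [he, EuclideanSpace.norm_single] using h
  have hnormsq_eq : ∀ w : Euc D, ‖w‖ ^ 2 = ∑ j, (w j) ^ 2 := by
    intro w
    rw [EuclideanSpace.norm_eq, Real.sq_sqrt (by positivity)]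
    simp [sq_abs]
  have hnormsq_int : Integrable (fun w : Euc D => ‖w‖ ^ 2) μ := by
    have : (fun w : Euc D => ‖w‖ ^ 2) = fun w => ∑ j, (w j) ^ 2 := funext hnormsq_eq
    rw [this]
    exact integrable_finset_sum _ fun j _ => hsq_int j
  have habs_le : ∀ (w : Euc D) (j : Fin D), |w j| ≤ ‖w‖ := by
    intro w j
    have h1 : (w j) ^ 2 ≤ ‖w‖ ^ 2 := by
      rw [hnormsq_eq w]
      exact Finset.single_le_sum (fun i _ => sq_nonneg (w i)) (Finset.mem_univ j)
    calc |w j| = Real.sqrt ((w j) ^ 2) := (Real.sqrt_sq_eq_abs _).symm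
      _ ≤ Real.sqrt (‖w‖ ^ 2) := Real.sqrt_le_sqrt h1
      _ = ‖w‖ := by rw [Real.sqrt_sq (norm_nonneg w)]
  have hnorm_int : Integrable (fun w : Euc D => ‖w‖) μ := by
    refine Integrable.mono' ((integrable_const (1:ℝ)).add hnormsq_int)
      continuous_norm.aestronglyMeasurable (ae_of_all _ fun w => ?_)
    show ‖(‖w‖)‖ ≤ 1 + ‖w‖ ^ 2
    rw [Real.norm_eq_abs, abs_of_nonneg (norm_nonneg w)]
    nlinarith [sq_nonneg (‖w‖ - 1), norm_nonneg w]
  have hid_int : Integrable (fun w : Euc D => w) μ :=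
    (integrable_norm_iff aestronglyMeasurable_id).mp hnorm_int
  have hcoord_cont : ∀ j : Fin D, Continuous fun w : Euc D => w j := by
    intro j
    exact (EuclideanSpace.proj (𝕜 := ℝ) j).continuous
  have hcross_int : ∀ i j : Fin D, Integrable (fun w : Euc D => w i * w j) μ := by
    intro i j
    refine Integrable.mono' hnormsq_int
      (((hcoord_cont i).mul (hcoord_cont j)).aestronglyMeasurable)
      (ae_of_all _ fun w => ?_)
    rw [Real.norm_eq_abs, abs_mul]
    calc |w i| * |w j| ≤ ‖w‖ * ‖w‖ :=
          mul_le_mul (habs_le w i) (habs_le w j) (abs_nonneg _) (norm_nonneg _)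
      _ = ‖w‖ ^ 2 := (sq ‖w‖).symm
  have hcross : ∀ i j : Fin D, i ≠ j → ∫ w, w i * w j ∂μ = 0 := by
    intro i j hij
    have h := hcov (e i + e j)
    have hL : (fun w : Euc D => ⟪e i + e j, w⟫ ^ 2) =
        fun w => (w i) ^ 2 + 2 * (w i * w j) + (w j) ^ 2 := by
      funext w
      rw [inner_add_left, hinner, hinner]
      ring
    have hR : ‖e i + e j‖ ^ 2 = 2 := by
      rw [← real_inner_self_eq_norm_sq]
      simp only [inner_add_left, inner_add_right]
      have h11 : ⟪e i, e i⟫ = (1:ℝ) := by rw [hinner]; simp [he, EuclideanSpace.single_apply]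
      have h22 : ⟪e j, e j⟫ = (1:ℝ) := by rw [hinner]; simp [he, EuclideanSpace.single_apply]
      have h12 : ⟪e i, e j⟫ = (0:ℝ) := by
        rw [hinner]; simp [he, EuclideanSpace.single_apply, hij, hij.symm]
      have h21 : ⟪e j, e i⟫ = (0:ℝ) := by
        rw [hinner]; simp [he, EuclideanSpace.single_apply, hij, hij.symm]
      rw [h11, h22, h12, h21]; ring
    rw [hL, hR] at h
    have Ia : Integrable (fun w : Euc D => w i ^ 2 + 2 * (w i * w j)) μ :=
      (hsq_int i).add ((hcross_int i j).const_mul 2)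
    rw [integral_add Ia (hsq_int j),
      integral_add (hsq_int i) ((hcross_int i j).const_mul 2),
      integral_const_mul, hmoment i, hmoment j] at h
    linarith
  -- representation of w as a sum of coordinates
  have hwsum : ∀ w : Euc D, ∑ j, w j • e j = w := by
    intro w
    have h := (EuclideanSpace.basisFun (Fin D) ℝ).sum_repr w
    simpa [EuclideanSpace.basisFun_repr, EuclideanSpace.basisFun_apply, he] using h
  -- the Hessian at z
  set B := fderiv ℝ (fderiv ℝ p) z with hB
  have hBww_cont : Continuous fun w : Euc D => B w w :=
    (B.continuous).clm_apply continuous_id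
  have hBww_int : Integrable (fun w : Euc D => B w w) μ := by
    refine Integrable.mono' (hnormsq_int.const_mul ‖B‖)
      hBww_cont.aestronglyMeasurable (ae_of_all _ fun w => ?_)
    calc ‖B w w‖ ≤ ‖B‖ * ‖w‖ * ‖w‖ := B.le_opNorm₂ w w
      _ = ‖B‖ * ‖w‖ ^ 2 := by ring
  have hBrep : ∀ w : Euc D, B w w = ∑ i, ∑ j, w i * w j * (B (e i) (e j)) := by
    intro w
    conv_lhs => rw [← hwsum w]
    simp only [map_sum, ContinuousLinearMap.sum_apply, _root_.map_smul,
      ContinuousLinearMap.smul_apply, smul_eq_mul]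
    rw [Finset.sum_comm]
    refine Finset.sum_congr rfl fun i _ => ?_
    rw [Finset.mul_sum]
    exact Finset.sum_congr rfl fun j _ => by ring
  have hBint : ∫ w, B w w ∂μ = ∑ j, B (e j) (e j) := by
    have h1 : ∫ w, B w w ∂μ = ∑ i, ∑ j, (∫ w, w i * w j ∂μ) * B (e i) (e j) := by
      rw [integral_congr_ae (ae_of_all _ hBrep)]
      rw [integral_finset_sum _ fun i _ =>
        integrable_finset_sum _ fun j _ => (hcross_int i j).mul_const _]
      refine Finset.sum_congr rfl fun i _ => ?_
      rw [integral_finset_sum _ fun j _ => (hcross_int i j).mul_const _]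
      exact Finset.sum_congr rfl fun j _ => integral_mul_const _ _
    rw [h1]
    refine Finset.sum_congr rfl fun i _ => ?_
    rw [Finset.sum_eq_single i]
    · have : ∫ w, w i * w i ∂μ = 1 := by
        have := hmoment i
        simpa [sq] using this
      rw [this, one_mul]
    · intro j _ hji
      rw [hcross i j (Ne.symm hji), zero_mul]
    · intro h; exact absurd (Finset.mem_univ i) h
  have hlap : laplacian p z = ∑ j, B (e j) (e j) := by
    unfold laplacian
    refine Finset.sum_congr rfl fun j _ => ?_
    have hfd : HasFDerivAt (fun y => fderiv ℝ p y (e j))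
        ((ContinuousLinearMap.apply ℝ ℝ (e j)).comp B) z :=
      (ContinuousLinearMap.apply ℝ ℝ (e j)).hasFDerivAt.comp z (hdiff' z).hasFDerivAt
    rw [he] at hfd ⊢
    rw [hfd.fderiv]
    rfl
  -- gradient at z
  set L := fderiv ℝ p z with hLdef
  have hL_int : Integrable (fun w : Euc D => L w) μ := by
    refine Integrable.mono' (hnorm_int.const_mul ‖L‖)
      L.continuous.aestronglyMeasurable (ae_of_all _ fun w => L.le_opNorm w)
  have hLint0 : ∫ w, L w ∂μ = 0 := by
    have h := L.integral_comp_comm hid_int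
    rw [hmean, map_zero] at h
    simpa using h
  -- the normalized Taylor remainder
  set Fn : ℝ → Euc D → ℝ := fun s w =>
    (p (z - Real.sqrt s • w) - p z + Real.sqrt s * L w - s / 2 * B w w) / s with hFn
  -- the key Taylor estimate
  have key : ∀ s : ℝ, 0 < s → ∀ w : Euc D, ∀ M : ℝ,
      (∀ x ∈ Icc (0:ℝ) (Real.sqrt s),
        |fderiv ℝ (fderiv ℝ p) (z - x • w) w w - B w w| ≤ M) →
      |p (z - Real.sqrt s • w) - p z + Real.sqrt s * L w - s / 2 * B w w| ≤ M / 2 * s := by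
    intro s hs w M hMb
    obtain ⟨h1, h2⟩ := phi_deriv p hp2 z w
    set f : ℝ → ℝ := fun t => p (z - t • w) - t ^ 2 / 2 * B w w with hf
    set f1 : ℝ → ℝ := fun t => -(fderiv ℝ p (z - t • w) w) - t * B w w with hf1
    set f2 : ℝ → ℝ := fun t => fderiv ℝ (fderiv ℝ p) (z - t • w) w w - B w w with hf2
    have hd1 : ∀ t, HasDerivAt f (f1 t) t := by
      intro t
      have hq : HasDerivAt (fun t : ℝ => t ^ 2 / 2 * B w w) (t * B w w) t := by
        have := ((hasDerivAt_pow 2 t).div_const 2).mul_const (B w w)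
        exact this.congr_deriv (by simp)
      exact (h1 t).sub hq
    have hd2 : ∀ t, HasDerivAt f1 (f2 t) t := by
      intro t
      have := (h2 t).sub ((hasDerivAt_id t).mul_const (B w w))
      exact this.congr_deriv (by simp [hf2])
    have hT := taylor2_bound hd1 hd2 (Real.sqrt_nonneg s) hMb
    have hsq : Real.sqrt s ^ 2 = s := Real.sq_sqrt hs.le
    have hzero : f 0 = p z := by simp [hf]
    have hfs : f (Real.sqrt s) = p (z - Real.sqrt s • w) - s / 2 * B w w := by
      rw [hf]; simp only []; rw [hsq]
    have hf10 : f1 0 = -(L w) := by simp [hf1, hLdef]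
    rw [hfs, hzero, hf10] at hT
    calc |p (z - Real.sqrt s • w) - p z + Real.sqrt s * L w - s / 2 * B w w|
        = |p (z - Real.sqrt s • w) - s / 2 * B w w - p z - Real.sqrt s * (-(L w))| := by
          ring_nf
      _ ≤ M / 2 * Real.sqrt s ^ 2 := hT
      _ = M / 2 * s := by rw [hsq]
  -- uniform bound constants
  obtain ⟨K, hKb⟩ := (isCompact_closedBall z 1).exists_bound_of_continuousOn
    (f := fderiv ℝ (fderiv ℝ p)) (by exact hHcont.continuousOn)
  have hK0 : 0 ≤ K := le_trans (norm_nonneg _) (hKb z (Metric.mem_closedBall_self zero_le_one))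
  set C' : ℝ := K + (2 * C + ‖L‖ + ‖B‖) with hC'
  have hC'0 : 0 ≤ C' := by positivity
  -- domination
  have hdom : ∀ s ∈ Ioc (0:ℝ) 1, ∀ w : Euc D, |Fn s w| ≤ C' * ‖w‖ ^ 2 := by
    intro s hs w
    have hs0 : 0 < s := hs.1
    have hsrt : 0 < Real.sqrt s := Real.sqrt_pos.2 hs0
    have hsq : Real.sqrt s * Real.sqrt s = s := Real.mul_self_sqrt hs0.le
    have hFabs : |Fn s w| =
        |p (z - Real.sqrt s • w) - p z + Real.sqrt s * L w - s / 2 * B w w| / s := by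
      rw [hFn]
      rw [abs_div, abs_of_pos hs0]
    rcases le_or_gt (Real.sqrt s * ‖w‖) 1 with hcase | hcase
    · -- near case : use Taylor with Hessian bound on the unit ball
      have hM : ∀ x ∈ Icc (0:ℝ) (Real.sqrt s),
          |fderiv ℝ (fderiv ℝ p) (z - x • w) w w - B w w| ≤ 2 * K * ‖w‖ ^ 2 := by
        intro x hx
        have hmem : z - x • w ∈ Metric.closedBall z 1 := by
          rw [Metric.mem_closedBall, dist_eq_norm]
          have : ‖z - x • w - z‖ = x * ‖w‖ := by
            rw [sub_sub_cancel_left, norm_neg, norm_smul, Real.norm_eq_abs,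
              abs_of_nonneg hx.1]
          rw [this]
          calc x * ‖w‖ ≤ Real.sqrt s * ‖w‖ :=
                mul_le_mul_of_nonneg_right hx.2 (norm_nonneg w)
            _ ≤ 1 := hcase
        have b1 : |fderiv ℝ (fderiv ℝ p) (z - x • w) w w| ≤ K * ‖w‖ ^ 2 := by
          have := ContinuousLinearMap.le_opNorm₂ (fderiv ℝ (fderiv ℝ p) (z - x • w)) w w
          have h2 := hKb _ hmem
          rw [← Real.norm_eq_abs]
          calc ‖fderiv ℝ (fderiv ℝ p) (z - x • w) w w‖
              ≤ ‖fderiv ℝ (fderiv ℝ p) (z - x • w)‖ * ‖w‖ * ‖w‖ := this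
            _ ≤ K * ‖w‖ * ‖w‖ := by
                have := mul_le_mul_of_nonneg_right
                  (mul_le_mul_of_nonneg_right h2 (norm_nonneg w)) (norm_nonneg w)
                exact this
            _ = K * ‖w‖ ^ 2 := by ring
        have b2 : |B w w| ≤ K * ‖w‖ ^ 2 := by
          have := ContinuousLinearMap.le_opNorm₂ B w w
          have h2 := hKb z (Metric.mem_closedBall_self zero_le_one)
          rw [hB, ← Real.norm_eq_abs]
          calc ‖fderiv ℝ (fderiv ℝ p) z w w‖
              ≤ ‖fderiv ℝ (fderiv ℝ p) z‖ * ‖w‖ * ‖w‖ := by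
                rw [hB] at this; exact this
            _ ≤ K * ‖w‖ * ‖w‖ := by
                exact mul_le_mul_of_nonneg_right
                  (mul_le_mul_of_nonneg_right h2 (norm_nonneg w)) (norm_nonneg w)
            _ = K * ‖w‖ ^ 2 := by ring
        calc |fderiv ℝ (fderiv ℝ p) (z - x • w) w w - B w w|
            ≤ |fderiv ℝ (fderiv ℝ p) (z - x • w) w w| + |B w w| := abs_sub _ _
          _ ≤ K * ‖w‖ ^ 2 + K * ‖w‖ ^ 2 := add_le_add b1 b2
          _ = 2 * K * ‖w‖ ^ 2 := by ring
      have := key s hs0 w _ hM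
      rw [hFabs, div_le_iff₀ hs0]
      calc |p (z - Real.sqrt s • w) - p z + Real.sqrt s * L w - s / 2 * B w w|
          ≤ 2 * K * ‖w‖ ^ 2 / 2 * s := this
        _ = K * ‖w‖ ^ 2 * s := by ring
        _ ≤ C' * ‖w‖ ^ 2 * s := by
            have hKC : K ≤ C' := by
              rw [hC']
              have h1 := norm_nonneg L
              have h2 := norm_nonneg B
              linarith
            exact mul_le_mul_of_nonneg_right
              (mul_le_mul_of_nonneg_right hKC (sq_nonneg _)) hs0.le
    · -- far case : crude bound
      have h1 : 1 ≤ Real.sqrt s * ‖w‖ := hcase.le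
      have hw0 : 0 < ‖w‖ := by
        by_contra h
        push_neg at h
        have : ‖w‖ = 0 := le_antisymm h (norm_nonneg w)
        rw [this, mul_zero] at hcase
        linarith
      have h2 : 1 ≤ s * ‖w‖ ^ 2 := by nlinarith
      have hb1 : |p (z - Real.sqrt s • w)| ≤ C := hCb _
      have hb2 : |p z| ≤ C := hCb z
      have hb3 : |L w| ≤ ‖L‖ * ‖w‖ := L.le_opNorm w
      have hb4 : |B w w| ≤ ‖B‖ * ‖w‖ ^ 2 := by
        calc |B w w| ≤ ‖B‖ * ‖w‖ * ‖w‖ := B.le_opNorm₂ w w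
          _ = ‖B‖ * ‖w‖ ^ 2 := by ring
      rw [hFabs, div_le_iff₀ hs0]
      have habs : |p (z - Real.sqrt s • w) - p z + Real.sqrt s * L w - s / 2 * B w w|
          ≤ C + C + Real.sqrt s * (‖L‖ * ‖w‖) + s / 2 * (‖B‖ * ‖w‖ ^ 2) := by
        calc |p (z - Real.sqrt s • w) - p z + Real.sqrt s * L w - s / 2 * B w w|
            ≤ |p (z - Real.sqrt s • w) - p z + Real.sqrt s * L w| +
              |s / 2 * B w w| := abs_sub _ _
          _ ≤ |p (z - Real.sqrt s • w) - p z| + |Real.sqrt s * L w| +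
              |s / 2 * B w w| := by
                have := abs_add_le (p (z - Real.sqrt s • w) - p z) (Real.sqrt s * L w)
                linarith
          _ ≤ (|p (z - Real.sqrt s • w)| + |p z|) + |Real.sqrt s * L w| +
              |s / 2 * B w w| := by
                have := abs_sub (p (z - Real.sqrt s • w)) (p z)
                linarith
          _ ≤ C + C + Real.sqrt s * (‖L‖ * ‖w‖) + s / 2 * (‖B‖ * ‖w‖ ^ 2) := by
              rw [abs_mul, abs_mul, abs_of_nonneg (Real.sqrt_nonneg s),
                abs_of_nonneg (by linarith : (0:ℝ) ≤ s / 2)]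
              have g1 := mul_le_mul_of_nonneg_left hb3 (Real.sqrt_nonneg s)
              have g2 := mul_le_mul_of_nonneg_left hb4 (by linarith : (0:ℝ) ≤ s / 2)
              linarith
      refine le_trans habs ?_
      have e1 : C + C ≤ 2 * C * (s * ‖w‖ ^ 2) := by nlinarith
      have e2 : Real.sqrt s * (‖L‖ * ‖w‖) ≤ ‖L‖ * ‖w‖ ^ 2 * s := by
        have c0 : 0 ≤ Real.sqrt s * ‖L‖ * ‖w‖ :=
          mul_nonneg (mul_nonneg (Real.sqrt_nonneg s) (norm_nonneg L)) (norm_nonneg w)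
        calc Real.sqrt s * (‖L‖ * ‖w‖) = Real.sqrt s * ‖L‖ * ‖w‖ * 1 := by ring
          _ ≤ Real.sqrt s * ‖L‖ * ‖w‖ * (Real.sqrt s * ‖w‖) :=
              mul_le_mul_of_nonneg_left h1 c0
          _ = Real.sqrt s * Real.sqrt s * (‖L‖ * ‖w‖ ^ 2) := by ring
          _ = ‖L‖ * ‖w‖ ^ 2 * s := by rw [hsq]; ring
      have e3 : s / 2 * (‖B‖ * ‖w‖ ^ 2) ≤ ‖B‖ * ‖w‖ ^ 2 * s := by
        nlinarith [norm_nonneg B, sq_nonneg ‖w‖, hs0.le]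
      have : C' * ‖w‖ ^ 2 * s = K * ‖w‖ ^ 2 * s + 2 * C * (s * ‖w‖ ^ 2) +
          ‖L‖ * ‖w‖ ^ 2 * s + ‖B‖ * ‖w‖ ^ 2 * s := by rw [hC']; ring
      rw [this]
      have hKn : 0 ≤ K * ‖w‖ ^ 2 * s :=
        mul_nonneg (mul_nonneg hK0 (sq_nonneg ‖w‖)) hs0.le
      linarith
  -- pointwise convergence
  have hpt : ∀ w : Euc D, Tendsto (fun s => Fn s w) (𝓝[>] (0:ℝ)) (𝓝 0) := by
    intro w
    rw [NormedAddCommGroup.tendsto_nhds_zero]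
    intro ε hε
    set g : ℝ → ℝ := fun x => fderiv ℝ (fderiv ℝ p) (z - x • w) w w - B w w with hgdef
    have hgcont : Continuous g := by
      have h1 : Continuous fun x : ℝ => z - x • w :=
        continuous_const.sub (continuous_id.smul continuous_const)
      have h2 : Continuous fun x : ℝ => fderiv ℝ (fderiv ℝ p) (z - x • w) :=
        hHcont.comp h1
      exact ((h2.clm_apply continuous_const).clm_apply continuous_const).sub
        continuous_const
    have hg0 : g 0 = 0 := by simp [hgdef, hB]
    have := hgcont.continuousAt (x := (0:ℝ))
    rw [Metric.continuousAt_iff] at this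
    obtain ⟨δ, hδ0, hδ⟩ := this (ε / 2) (by linarith)
    filter_upwards [Ioo_mem_nhdsGT_of_mem
      (show (0:ℝ) ∈ Ico 0 (δ ^ 2) by exact ⟨le_rfl, by positivity⟩)] with s hs
    have hs0 : 0 < s := hs.1
    have hsrt : Real.sqrt s < δ := by
      rw [show δ = Real.sqrt (δ ^ 2) by rw [Real.sqrt_sq hδ0.le]]
      exact Real.sqrt_lt_sqrt hs0.le hs.2
    have hM : ∀ x ∈ Icc (0:ℝ) (Real.sqrt s),
        |fderiv ℝ (fderiv ℝ p) (z - x • w) w w - B w w| ≤ ε / 2 := by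
      intro x hx
      have hxδ : dist x 0 < δ := by
        rw [Real.dist_eq, sub_zero, abs_of_nonneg hx.1]
        exact lt_of_le_of_lt hx.2 hsrt
      have := hδ hxδ
      rw [Real.dist_eq, hg0, sub_zero] at this
      exact le_of_lt this
    have hkey := key s hs0 w _ hM
    have : |Fn s w| ≤ ε / 2 / 2 := by
      rw [hFn]
      rw [abs_div, abs_of_pos hs0, div_le_iff₀ hs0]
      exact hkey
    rw [Real.norm_eq_abs]
    linarith
  -- measurability
  have hmeas : ∀ s : ℝ, AEStronglyMeasurable (Fn s) μ := by
    intro s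
    apply Continuous.aestronglyMeasurable
    have h1 : Continuous fun w : Euc D => p (z - Real.sqrt s • w) :=
      hcont.comp (continuous_const.sub (continuous_const_smul _))
    have h2 : Continuous fun w : Euc D => L w := L.continuous
    exact (((h1.sub continuous_const).add (continuous_const.mul h2)).sub
      (continuous_const.mul hBww_cont)).div_const s
  -- dominated convergence
  have htend : Tendsto (fun s => ∫ w, Fn s w ∂μ) (𝓝[>] (0:ℝ)) (𝓝 0) := by
    have h := tendsto_integral_filter_of_dominated_convergence
      (μ := μ) (F := Fn) (f := fun _ => (0:ℝ)) (bound := fun w => C' * ‖w‖ ^ 2)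
      (Eventually.of_forall hmeas)
      (by
        filter_upwards [Ioc_mem_nhdsGT zero_lt_one] with s hs
        exact ae_of_all _ fun w => by
          rw [Real.norm_eq_abs]; exact hdom s hs w)
      (hnormsq_int.const_mul C')
      (ae_of_all _ hpt)
    simpa using h
  -- the integral identity
  have hFint : ∀ s : ℝ, 0 < s →
      smoothed p μ s z - p z - s / 2 * laplacian p z = (∫ w, Fn s w ∂μ) * s := by
    intro s hs
    have Ip : Integrable (fun w : Euc D => p (z - Real.sqrt s • w)) μ := by
      refine Integrable.mono' (integrable_const C)
        (hcont.comp (continuous_const.sub (continuous_const_smul _))).aestronglyMeasurable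
        (ae_of_all _ fun w => ?_)
      rw [Real.norm_eq_abs]
      exact hCb _
    have h1 : ∫ w, Fn s w ∂μ =
        (∫ w, (p (z - Real.sqrt s • w) - p z + Real.sqrt s * L w - s / 2 * B w w) ∂μ) / s := by
      rw [hFn]
      exact integral_div s _
    have h2 : ∫ w, (p (z - Real.sqrt s • w) - p z + Real.sqrt s * L w - s / 2 * B w w) ∂μ
        = smoothed p μ s z - p z - s / 2 * laplacian p z := by
      have I1 : Integrable (fun w : Euc D => p (z - Real.sqrt s • w) - p z) μ :=
        Ip.sub (integrable_const (p z))
      have I2 : Integrable (fun w : Euc D => Real.sqrt s * L w) μ := hL_int.const_mul _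
      have I3 : Integrable
          (fun w : Euc D => p (z - Real.sqrt s • w) - p z + Real.sqrt s * L w) μ := I1.add I2
      have I4 : Integrable (fun w : Euc D => s / 2 * B w w) μ := hBww_int.const_mul _
      rw [integral_sub I3 I4, integral_add I1 I2, integral_sub Ip (integrable_const (p z)),
        integral_const_mul, integral_const_mul, hLint0, hBint, ← hlap]
      simp [smoothed]
    rw [h1, h2, div_mul_cancel₀]
    exact hs.ne'
  -- the little-o statement
  have hO : (fun s : ℝ => smoothed p μ s z - p z - s / 2 * laplacian p z)
      =o[𝓝[>] (0 : ℝ)] (fun s : ℝ => s) := by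
    rw [isLittleO_iff]
    intro c hc
    have hev := NormedAddCommGroup.tendsto_nhds_zero.mp htend c hc
    filter_upwards [hev, self_mem_nhdsWithin] with s h1 h2
    rw [mem_Ioi] at h2
    rw [hFint s h2, norm_mul]
    exact mul_le_mul_of_nonneg_right h1.le (norm_nonneg _)
  refine ⟨hO, ?_⟩
  rw [hasDerivWithinAt_iff_isLittleO]
  have h0 : smoothed p μ 0 z = p z := by
    simp [smoothed]
  have hsplit : 𝓝[Ici (0:ℝ)] 0 = pure 0 ⊔ 𝓝[>] (0:ℝ) := by
    rw [← Ioi_insert, nhdsWithin_insert]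
  simp only [sub_zero, smul_eq_mul, h0]
  rw [hsplit, isLittleO_sup]
  constructor
  · rw [isLittleO_pure]
    simp [h0]
  · have heq : (fun s : ℝ => smoothed p μ s z - p z - s * (1 / 2 * laplacian p z)) =
        fun s : ℝ => smoothed p μ s z - p z - s / 2 * laplacian p z := by
      funext s; ring_nf
    rw [heq]
    exact hO
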